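/- Let I ⊆ ℝ be an open interval, let ζ, B, R : ℝ → ℝ be continuously differentiable on I with ζ(r) ≠ 0, B(r) > 0, R(r) ≠ 0 for all r ∈ I, and with B continuously differentiable. Fix r₀ ∈ I and σ, ε ∈ ℝ, and define Z : I → ℝ by Z(r) = σ + ε ∫_{r₀}^{r} R(s)/(√(B(s))·ζ(s)²) ds. Then Z is twice differentiable on I and for all r ∈ I: 2R(r)²B(r)ζ(r)·Z''(r) + (R(r)²B'(r)ζ(r) + 4R(r)²B(r)ζ'(r) − 2B(r)R(r)R'(r)ζ(r))·Z'(r) = 0. -/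

import Mathlib

/-- Reduction-of-order lemma behind **General diagonal 2**: the factor
`Z(r) = σ + ε ∫ R/(√B ζ²)` is twice differentiable and satisfies
`2R²Bζ Z'' + (R²B'ζ + 4R²Bζ' − 2BRR'ζ) Z' = 0`. -/
theorem general_diagonal_two_lemma
    (a b : ℝ) (ζ B R : ℝ → ℝ)
    (hζ : ContDiffOn ℝ 1 ζ (Set.Ioo a b))
    (hB : ContDiffOn ℝ 1 B (Set.Ioo a b))
    (hR : ContDiffOn ℝ 1 R (Set.Ioo a b))
    (hζ0 : ∀ r ∈ Set.Ioo a b, ζ r ≠ 0)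
    (hB0 : ∀ r ∈ Set.Ioo a b, 0 < B r)
    (hR0 : ∀ r ∈ Set.Ioo a b, R r ≠ 0)
    (r₀ : ℝ) (hr₀ : r₀ ∈ Set.Ioo a b) (σ ε : ℝ) (Z : ℝ → ℝ)
    (hZ : ∀ r ∈ Set.Ioo a b,
      Z r = σ + ε * ∫ s in r₀..r, R s / (Real.sqrt (B s) * (ζ s) ^ 2)) :
    ∀ r ∈ Set.Ioo a b,
      (DifferentiableAt ℝ Z r ∧ DifferentiableAt ℝ (deriv Z) r) ∧
      2 * (R r) ^ 2 * B r * ζ r * deriv (deriv Z) r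
        + ((R r) ^ 2 * deriv B r * ζ r + 4 * (R r) ^ 2 * B r * deriv ζ r
            - 2 * B r * R r * deriv R r * ζ r) * deriv Z r = 0 := by
  set I := Set.Ioo a b with hI
  have hIopen : IsOpen I := isOpen_Ioo
  set g : ℝ → ℝ := fun s => R s / (Real.sqrt (B s) * (ζ s) ^ 2) with hg
  -- continuity of g on I
  have hgcont : ContinuousOn g I := by
    apply ContinuousOn.div hR.continuousOn
    · exact ((hB.continuousOn.sqrt)).mul (hζ.continuousOn.pow 2)
    · intro x hx
      exact mul_ne_zero (Real.sqrt_ne_zero'.mpr (hB0 x hx))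
        (pow_ne_zero 2 (hζ0 x hx))
  -- Z has derivative ε * g x at every x ∈ I
  have hZder : ∀ x ∈ I, HasDerivAt Z (ε * g x) x := by
    intro x hx
    have hsub : Set.uIcc r₀ x ⊆ I := Set.ordConnected_Ioo.uIcc_subset hr₀ hx
    have hint : IntervalIntegrable g MeasureTheory.volume r₀ x :=
      (hgcont.mono hsub).intervalIntegrable
    have hmeas : StronglyMeasurableAtFilter g (nhds x) :=
      hgcont.stronglyMeasurableAtFilter hIopen x hx
    have hcx : ContinuousAt g x := hgcont.continuousAt (hIopen.mem_nhds hx)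
    have hG : HasDerivAt (fun u => ∫ s in r₀..u, g s) (g x) x :=
      intervalIntegral.integral_hasDerivAt_right hint hmeas hcx
    have hF : HasDerivAt (fun u => σ + ε * ∫ s in r₀..u, g s) (ε * g x) x :=
      ((hG.const_mul ε).const_add σ)
    refine hF.congr_of_eventuallyEq ?_
    filter_upwards [hIopen.mem_nhds hx] with y hy
    exact hZ y hy
  have hderivZ : ∀ x ∈ I, deriv Z x = ε * g x := fun x hx => (hZder x hx).deriv
  intro r hr
  -- derivatives of components at r
  have hRd : HasDerivAt R (deriv R r) r :=
    ((hR.differentiableOn one_ne_zero).differentiableAt (hIopen.mem_nhds hr)).hasDerivAt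
  have hBd : HasDerivAt B (deriv B r) r :=
    ((hB.differentiableOn one_ne_zero).differentiableAt (hIopen.mem_nhds hr)).hasDerivAt
  have hζd : HasDerivAt ζ (deriv ζ r) r :=
    ((hζ.differentiableOn one_ne_zero).differentiableAt (hIopen.mem_nhds hr)).hasDerivAt
  have hBpos := hB0 r hr
  have hζne := hζ0 r hr
  set s := Real.sqrt (B r) with hs
  have hspos : 0 < s := Real.sqrt_pos.mpr hBpos
  have hsne : s ≠ 0 := ne_of_gt hspos
  have hssq : s ^ 2 = B r := Real.sq_sqrt hBpos.le
  have hsqrt : HasDerivAt (fun u => Real.sqrt (B u)) (1 / (2 * s) * deriv B r) r :=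
    (Real.hasDerivAt_sqrt (ne_of_gt hBpos)).comp r hBd
  have hζsq : HasDerivAt (fun u => (ζ u) ^ 2) (2 * ζ r ^ 1 * deriv ζ r) r :=
    hζd.pow 2
  have hden : HasDerivAt (fun u => Real.sqrt (B u) * (ζ u) ^ 2)
      (1 / (2 * s) * deriv B r * (ζ r) ^ 2 + s * (2 * ζ r ^ 1 * deriv ζ r)) r :=
    hsqrt.mul hζsq
  have hdenne : Real.sqrt (B r) * (ζ r) ^ 2 ≠ 0 :=
    mul_ne_zero hsne (pow_ne_zero 2 hζne)
  have hgd : HasDerivAt g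
      ((deriv R r * (Real.sqrt (B r) * (ζ r) ^ 2)
        - R r * (1 / (2 * s) * deriv B r * (ζ r) ^ 2 + s * (2 * ζ r ^ 1 * deriv ζ r)))
        / (Real.sqrt (B r) * (ζ r) ^ 2) ^ 2) r :=
    hRd.div hden hdenne
  have hEg : HasDerivAt (fun x => ε * g x)
      (ε * ((deriv R r * (Real.sqrt (B r) * (ζ r) ^ 2)
        - R r * (1 / (2 * s) * deriv B r * (ζ r) ^ 2 + s * (2 * ζ r ^ 1 * deriv ζ r)))
        / (Real.sqrt (B r) * (ζ r) ^ 2) ^ 2)) r := hgd.const_mul ε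
  have heq : deriv Z =ᶠ[nhds r] fun x => ε * g x := by
    filter_upwards [hIopen.mem_nhds hr] with y hy
    exact hderivZ y hy
  have hdZ2 : HasDerivAt (deriv Z)
      (ε * ((deriv R r * (Real.sqrt (B r) * (ζ r) ^ 2)
        - R r * (1 / (2 * s) * deriv B r * (ζ r) ^ 2 + s * (2 * ζ r ^ 1 * deriv ζ r)))
        / (Real.sqrt (B r) * (ζ r) ^ 2) ^ 2)) r :=
    hEg.congr_of_eventuallyEq heq
  refine ⟨⟨(hZder r hr).differentiableAt, hdZ2.differentiableAt⟩, ?_⟩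
  rw [hdZ2.deriv, hderivZ r hr]
  have hBr : B r = s ^ 2 := hssq.symm
  rw [hg]
  simp only []
  rw [show Real.sqrt (B r) = s from rfl, hBr]
  field_simp
  ring
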